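/- arXiv:2503.08566 — 2 statements merged into one kernel-verified Lean document; each statement's English description precedes it below -/
import Mathlib

section
/- Let G be a cyclic group of prime order p acting on a nonempty set A, let g be a generator of G, and let (x,y) ∈ A × A. Set r = {(gⁿ•x, gⁿ•y) : n = 0,1,…,p−1}, the orbit of (x,y) under the diagonal action. Then either r is the graph of a partial function on A (no two pairs in r share a first coordinate with different second coordinates), or the converse relation r⁻¹ is the graph of a partial function on A. -/
/-- A binary relation `R` on a `G`-set `A` is compatible if it is closed
under the diagonal action of `G`. -/
def IsCompatibleRel (G : Type*) {A : Type*} [Group G] [MulAction G A]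
    (R : Set (A × A)) : Prop :=
  ∀ p ∈ R, ∀ g : G, (g • p.1, g • p.2) ∈ R

/-- Relational composition of binary relations on `A`. -/
def relComp {A : Type*} (R S : Set (A × A)) : Set (A × A) :=
  {p | ∃ y, (p.1, y) ∈ R ∧ (y, p.2) ∈ S}

/-- Converse of a binary relation. -/
def relConv {A : Type*} (R : Set (A × A)) : Set (A × A) :=
  {p | (p.2, p.1) ∈ R}

/-- A binary relation is (the graph of) a partial function. -/
def IsPartialFun {A : Type*} (R : Set (A × A)) : Prop :=
  ∀ a b c : A, (a, b) ∈ R → (a, c) ∈ R → b = c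

theorem orbit_or_converse_function (G A : Type*) [Group G] [MulAction G A] [Nonempty A]
    (p : ℕ) (hp : p.Prime) [Fintype G] (hcard : Fintype.card G = p)
    (g : G) (hg : ∀ h : G, ∃ n : ℕ, g ^ n = h) (x y : A)
    (r : Set (A × A)) (hr : r = {q | ∃ n : ℕ, n < p ∧ q = (g ^ n • x, g ^ n • y)}) :
    IsPartialFun r ∨ IsPartialFun (relConv r) := by
  subst hr
  have hsub : MulAction.stabilizer G y = ⊥ ∨ MulAction.stabilizer G y = ⊤ := by
    have hG : Nat.card G = p := by rw [Nat.card_eq_fintype_card, hcard]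
    have hdvd : Nat.card (MulAction.stabilizer G y) ∣ Nat.card G :=
      Subgroup.card_subgroup_dvd_card _
    rw [hG] at hdvd
    rcases (Nat.Prime.eq_one_or_self_of_dvd hp _ hdvd) with h1 | h1
    · left
      exact Subgroup.eq_bot_of_card_eq _ h1
    · right
      exact Subgroup.eq_top_of_card_eq _ (by rw [h1, hG])
  rcases hsub with hy | hy
  · right
    rintro a b c ⟨m, hm, hab⟩ ⟨n, hn, hac⟩
    have hb : b = g ^ m • x := congrArg Prod.fst hab
    have ha1 : a = g ^ m • y := congrArg Prod.snd hab
    have hc : c = g ^ n • x := congrArg Prod.fst hac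
    have ha2 : a = g ^ n • y := congrArg Prod.snd hac
    have hstab : (g ^ n)⁻¹ * g ^ m ∈ MulAction.stabilizer G y := by
      rw [MulAction.mem_stabilizer_iff, mul_smul, ← ha1, ha2, inv_smul_smul]
    rw [hy, Subgroup.mem_bot] at hstab
    rw [hb, hc, inv_mul_eq_one.mp hstab]
  · left
    rintro a b c ⟨m, hm, hab⟩ ⟨n, hn, hac⟩
    have hb : b = g ^ m • y := congrArg Prod.snd hab
    have hc : c = g ^ n • y := congrArg Prod.snd hac
    have hfix : ∀ h : G, h • y = y := fun h => by
      have : h ∈ MulAction.stabilizer G y := hy ▸ Subgroup.mem_top h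
      exact this
    rw [hb, hc, hfix, hfix]
end

section
/- Let σ be an involution on a set U and consider the Z₂-action on U induced by σ. Then for every atom r of the algebra of compatible relations (i.e., every orbit of a pair under the diagonal action), either r or its converse r⁻¹ is the graph of a partial function on U. -/
theorem z2_atoms_almost_functions (U : Type*) (σ : U → U)
    (hσ : Function.Involutive σ) (x y : U) :
    IsPartialFun ({(x, y), (σ x, σ y)} : Set (U × U)) ∨
    IsPartialFun (relConv ({(x, y), (σ x, σ y)} : Set (U × U))) := by
  by_cases h : σ x = x → σ y = y
  · left
    intro a b c hab hac
    simp only [Set.mem_insert_iff, Set.mem_singleton_iff, Prod.mk.injEq] at hab hac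
    rcases hab with ⟨ha1, hb1⟩ | ⟨ha1, hb1⟩ <;> rcases hac with ⟨ha2, hc⟩ | ⟨ha2, hc⟩ <;>
      subst hb1 <;> subst hc
    · rfl
    · exact (h (ha2.symm.trans ha1)).symm
    · exact h (ha1.symm.trans ha2)
    · rfl
  · right
    push_neg at h
    obtain ⟨hx, hy⟩ := h
    intro a b c hab hac
    simp only [relConv, Set.mem_setOf_eq, Set.mem_insert_iff, Set.mem_singleton_iff,
      Prod.mk.injEq] at hab hac
    rcases hab with ⟨hb1, ha1⟩ | ⟨hb1, ha1⟩ <;> rcases hac with ⟨hc1, ha2⟩ | ⟨hc1, ha2⟩ <;>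
      subst hb1 <;> subst hc1
    · rfl
    · exact absurd (ha2.symm.trans ha1) hy
    · exact absurd (ha1.symm.trans ha2) hy
    · rfl
end
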